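/- arXiv:1002.0519 — 2 statements merged into one kernel-verified Lean document; each statement's English description precedes it below -/
import Mathlib

section
/- Let x ∈ ℂ, let z ∈ ℤ[i] be such that z and conj(z) are coprime in ℤ[i], and let ε ∈ {1, −1, i, −i}. The reflection T: w ↦ ε·(z/conj(z))·conj(w) belongs to OC(x+Γ) if and only if εz·conj(x) − conj(z)·x ∈ ℤ[i]. -/
open Pointwise Complex ComplexConjugate

/-- The square lattice `Γ = ℤ[i]`, i.e. the Gaussian integers viewed as an additive
subgroup of `ℂ`. -/
noncomputable def Zi : AddSubgroup ℂ :=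
  AddMonoidHom.range (GaussianInt.toComplex.toAddMonoidHom)

/-- `f` is (the underlying map of) a surjective real-linear isometry of `ℂ`. -/
def IsLinIso (f : ℂ → ℂ) : Prop := ∃ R : ℂ ≃ₗᵢ[ℝ] ℂ, ⇑R = f

/-- `f` is a rotation of `ℂ`, i.e. multiplication by a complex number of modulus 1. -/
def IsRotation (f : ℂ → ℂ) : Prop := ∃ u : ℂ, ‖u‖ = 1 ∧ ∀ w, f w = u * w

/-- `f` is a reflection of `ℂ`, i.e. `w ↦ u * conj w` for a complex number `u` of
modulus 1. -/
def IsReflection (f : ℂ → ℂ) : Prop := ∃ u : ℂ, ‖u‖ = 1 ∧ ∀ w, f w = u * conj w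

/-- The shifted square lattice `x + Γ` as a subset of `ℂ`. -/
noncomputable def shiftedZi (x : ℂ) : Set ℂ := x +ᵥ (Zi : Set ℂ)

/-- `OC (x+Γ)`: the set of (maps of) surjective real-linear isometries `f` of `ℂ` such
that `(x+Γ) ∩ f(x+Γ)` is a coset `c + Λ`, with `c ∈ x+Γ` and `Λ` a finite-index
additive subgroup of `Γ = ℤ[i]`. -/
noncomputable def OCs (x : ℂ) : Set (ℂ → ℂ) :=
  {f | IsLinIso f ∧ ∃ c ∈ shiftedZi x, ∃ Λ : AddSubgroup ℂ, Λ ≤ Zi ∧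
    Λ.relIndex Zi ≠ 0 ∧ shiftedZi x ∩ (f '' shiftedZi x) = c +ᵥ (Λ : Set ℂ)}

/-- `SOC (x+Γ)`: the rotations among the coincidence isometries of `x + Γ`. -/
noncomputable def SOCs (x : ℂ) : Set (ℂ → ℂ) := {f ∈ OCs x | IsRotation f}

section Aux

open GaussianInt

/-- The sublattice `zΓ` of `Γ = ℤ[i]` as an additive subgroup of `ℂ`. -/
noncomputable def zLat (z : GaussianInt) : AddSubgroup ℂ :=
  AddMonoidHom.range (GaussianInt.toComplex.toAddMonoidHom.comp (AddMonoidHom.mulLeft z))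

lemma zLat_le_Zi (z : GaussianInt) : zLat z ≤ Zi := by
  rintro w ⟨m, rfl⟩; exact ⟨z * m, rfl⟩

lemma zLat_relindex_ne_zero (z : GaussianInt) (hz : z ≠ 0) : (zLat z).relIndex Zi ≠ 0 := by
  set N := z.norm.natAbs with hNdef
  have hN : N ≠ 0 := by
    simpa [hNdef, Int.natAbs_eq_zero] using (fun h => hz (norm_eq_zero.1 h))
  haveI : NeZero N := ⟨hN⟩
  have hNz : ((N : ℤ) : GaussianInt) = z * star z := by
    rw [hNdef, Int.natAbs_of_nonneg (Zsqrtd.norm_nonneg (by norm_num) z),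
      Zsqrtd.norm_eq_mul_conj]
  have hzb : star z ≠ 0 := fun h => hz (by simpa using congrArg star h)
  let χ : GaussianInt →+ ZMod N × ZMod N :=
  { toFun := fun g => ((((star z * g).re : ℤ) : ZMod N), (((star z * g).im : ℤ) : ZMod N))
    map_zero' := by simp
    map_add' := by intro a b; simp [mul_add, Prod.ext_iff] }
  have hχ : ∀ g : GaussianInt, χ g = 0 ↔ z ∣ g := by
    intro g
    have h1 : χ g = 0 ↔ ((N : ℤ) : GaussianInt) ∣ star z * g := by
      show ((((star z * g).re : ℤ) : ZMod N), (((star z * g).im : ℤ) : ZMod N)) = 0 ↔ _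
      rw [Prod.mk_eq_zero, ZMod.intCast_zmod_eq_zero_iff_dvd,
        ZMod.intCast_zmod_eq_zero_iff_dvd, Zsqrtd.intCast_dvd]
    rw [h1, hNz, mul_comm z (star z), mul_dvd_mul_iff_left hzb]
  let e : GaussianInt ≃+ Zi := AddMonoidHom.ofInjective
    (f := GaussianInt.toComplex.toAddMonoidHom) toComplex_injective
  let φ : Zi →+ ZMod N × ZMod N := χ.comp e.symm.toAddMonoidHom
  have hker : (zLat z).addSubgroupOf Zi = φ.ker := by
    ext w
    have hsy : toComplex (e.symm w) = (w : ℂ) :=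
      AddMonoidHom.apply_ofInjective_symm toComplex_injective w
    simp only [AddSubgroup.mem_addSubgroupOf, AddMonoidHom.mem_ker, φ, AddMonoidHom.comp_apply,
      AddEquiv.coe_toAddMonoidHom, hχ]
    constructor
    · rintro ⟨m, hm⟩
      exact ⟨m, toComplex_injective (by rw [hsy]; exact hm.symm)⟩
    · rintro ⟨m, hm⟩
      exact ⟨m, by show toComplex (z * m) = (w : ℂ); rw [← hm, hsy]⟩
  have hfin : Finite (Zi ⧸ (zLat z).addSubgroupOf Zi) := by
    rw [hker]
    exact Finite.of_equiv _ (QuotientAddGroup.quotientKerEquivRange φ).symm.toEquiv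
  exact AddSubgroup.index_ne_zero_of_finite

lemma mem_shiftedZi {x w : ℂ} : w ∈ shiftedZi x ↔ ∃ g : GaussianInt, x + (g : ℂ) = w := by
  rw [shiftedZi, Set.mem_vadd_set]
  constructor
  · rintro ⟨y, ⟨g, rfl⟩, h⟩; exact ⟨g, h⟩
  · rintro ⟨g, h⟩; exact ⟨g, ⟨g, rfl⟩, h⟩

theorem key (x : ℂ) (z : GaussianInt) (hcop : IsCoprime z (star z))
    (ε : ℂ) (e e' : GaussianInt) (hεe : (e : ℂ) = ε) (hee' : e * e' = 1) (hεn : ‖ε‖ = 1) :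
    (fun w => ε * ((z : ℂ) / conj (z : ℂ)) * conj w) ∈ OCs x ↔
      ε * (z : ℂ) * conj x - conj (z : ℂ) * x ∈ Zi := by
  have hz : z ≠ 0 := by
    rintro rfl; rw [star_zero, isCoprime_zero_left] at hcop; exact not_isUnit_zero hcop
  have hzC : (z : ℂ) ≠ 0 := fun h => hz (toComplex_eq_zero.1 h)
  have hzbC : conj (z : ℂ) ≠ 0 := fun h => hzC (by simpa using congrArg conj h)
  have hee'C : ε * (e' : ℂ) = 1 := by
    rw [← hεe, ← toComplex_mul, hee', toComplex_one]
  constructor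
  · rintro ⟨-, c, -, Λ, -, -, hset⟩
    have hcmem : c ∈ shiftedZi x ∩
        ((fun w => ε * ((z : ℂ) / conj (z : ℂ)) * conj w) '' shiftedZi x) := by
      rw [hset, Set.mem_vadd_set]
      exact ⟨0, Λ.zero_mem, add_zero c⟩
    obtain ⟨hc1, v, hv, hTv⟩ := hcmem
    obtain ⟨g, hg⟩ := mem_shiftedZi.1 hc1
    obtain ⟨γ, hγ⟩ := mem_shiftedZi.1 hv
    have h2 : ε * (z : ℂ) * (conj x + conj (γ : ℂ)) = (x + (g : ℂ)) * conj (z : ℂ) := by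
      have h3 : ε * ((z : ℂ) / conj (z : ℂ)) * conj (x + (γ : ℂ)) = x + (g : ℂ) := by
        rw [hγ, hg]; exact hTv
      rw [map_add] at h3
      field_simp at h3
      linear_combination h3
    refine ⟨star z * g - e * z * star γ, ?_⟩
    show toComplex (star z * g - e * z * star γ) = _
    simp only [toComplex_sub, toComplex_mul, toComplex_star, hεe]
    linear_combination -h2
  · rintro ⟨k, hk⟩
    replace hk : toComplex k = ε * (z : ℂ) * conj x - conj (z : ℂ) * x := hk
    obtain ⟨a, b, hab⟩ := hcop
    set g₀ : GaussianInt := k * b with hg₀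
    set h₀ : GaussianInt := -(e' * (k * a)) with hh₀
    have hBez : star z * g₀ - e * z * h₀ = k := by
      rw [hg₀, hh₀]; linear_combination k * hab + k * a * z * hee'
    have hBezC : conj (z : ℂ) * (g₀ : ℂ) - ε * (z : ℂ) * (h₀ : ℂ) = (k : ℂ) := by
      have h4 := congrArg toComplex hBez
      simp only [toComplex_sub, toComplex_mul, toComplex_star, hεe] at h4
      linear_combination h4
    have hcop' : IsCoprime z (star z) := ⟨a, b, hab⟩
    refine ⟨?_, x + (g₀ : ℂ), mem_shiftedZi.2 ⟨g₀, rfl⟩, zLat z, zLat_le_Zi z,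
      zLat_relindex_ne_zero z hz, ?_⟩
    · have hu : ‖ε * ((z : ℂ) / conj (z : ℂ))‖ = 1 := by
        rw [norm_mul, norm_div, RCLike.norm_conj, div_self (by simpa using hzC), hεn, mul_one]
      refine ⟨conjLIE.trans (rotation ⟨ε * ((z : ℂ) / conj (z : ℂ)), by
        simpa [Circle, Submonoid.unitSphere, mem_sphere_zero_iff_norm] using hu⟩),
        funext fun w => ?_⟩
      exact rotation_apply _ _
    · ext w
      constructor
      · rintro ⟨hw1, v, hv, hTv⟩
        obtain ⟨g, hg⟩ := mem_shiftedZi.1 hw1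
        obtain ⟨γ, hγ⟩ := mem_shiftedZi.1 hv
        have h2 : ε * (z : ℂ) * (conj x + conj (γ : ℂ)) = (x + (g : ℂ)) * conj (z : ℂ) := by
          have h3 : ε * ((z : ℂ) / conj (z : ℂ)) * conj (x + (γ : ℂ)) = x + (g : ℂ) := by
            rw [hγ, hg]; exact hTv
          rw [map_add] at h3
          field_simp at h3
          linear_combination h3
        have hgγ : star z * g - e * z * star γ = k := by
          apply toComplex_injective
          simp only [toComplex_sub, toComplex_mul, toComplex_star, hεe]
          rw [hk]
          linear_combination -h2
        have hdvd : z ∣ g - g₀ := by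
          apply hcop'.dvd_of_dvd_mul_left
          refine ⟨e * (star γ - h₀), ?_⟩
          linear_combination hgγ - hBez
        obtain ⟨m, hm⟩ := hdvd
        rw [Set.mem_vadd_set]
        refine ⟨toComplex (z * m), ⟨m, rfl⟩, ?_⟩
        show x + (g₀ : ℂ) + ((z * m : GaussianInt) : ℂ) = w
        rw [← hm, ← hg]
        simp only [toComplex_sub]
        ring
      · rw [Set.mem_vadd_set]
        rintro ⟨y, ⟨m, rfl⟩, hw⟩
        replace hw : x + (g₀ : ℂ) + ((z * m : GaussianInt) : ℂ) = w := hw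
        constructor
        · exact mem_shiftedZi.2 ⟨g₀ + z * m, by rw [← hw]; simp only [toComplex_add]; ring⟩
        · set t : GaussianInt := h₀ + e' * star z * m with ht
          refine ⟨x + conj (t : ℂ), mem_shiftedZi.2 ⟨star t, by rw [toComplex_star]⟩, ?_⟩
          show ε * ((z : ℂ) / conj (z : ℂ)) * conj (x + conj (t : ℂ)) = w
          rw [map_add, Complex.conj_conj, ← hw]
          have htC : (t : ℂ) = (h₀ : ℂ) + (e' : ℂ) * conj (z : ℂ) * (m : ℂ) := by
            rw [ht]; simp only [toComplex_add, toComplex_mul, toComplex_star]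
          have hzm : ((z * m : GaussianInt) : ℂ) = (z : ℂ) * (m : ℂ) := toComplex_mul z m
          rw [htC, hzm]
          apply mul_right_cancel₀ hzbC
          have hdiv : ε * ((z : ℂ) / conj (z : ℂ)) *
                (conj x + ((h₀ : ℂ) + (e' : ℂ) * conj (z : ℂ) * (m : ℂ))) * conj (z : ℂ)
              = ε * (z : ℂ) * (conj x + ((h₀ : ℂ) + (e' : ℂ) * conj (z : ℂ) * (m : ℂ))) := by
            field_simp
          rw [hdiv]
          linear_combination -hk - hBezC + ((z : ℂ) * conj (z : ℂ) * (m : ℂ)) * hee'C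

end Aux

theorem reflection_mem_OC_iff (x : ℂ) (z : GaussianInt) (hcop : IsCoprime z (star z))
    (ε : ℂ) (hε : ε ∈ ({1, -1, I, -I} : Set ℂ)) :
    (fun w => ε * ((z : ℂ) / conj (z : ℂ)) * conj w) ∈ OCs x ↔
      ε * (z : ℂ) * conj x - conj (z : ℂ) * x ∈ Zi := by
  rcases hε with rfl | rfl | rfl | rfl
  · exact key x z hcop 1 1 1 (by simp) (by ring) (by simp)
  · exact key x z hcop (-1) (-1) (-1) (by simp) (by ring) (by simp)
  · exact key x z hcop I ⟨0, 1⟩ ⟨0, -1⟩ (by simp [GaussianInt.toComplex_def'])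
      (by decide) (by simp)
  · exact key x z hcop (-I) ⟨0, -1⟩ ⟨0, 1⟩ (by simp [GaussianInt.toComplex_def'])
      (by decide) (by simp)
end

section
/- Let x ∈ ℂ. The set OC(x+Γ) is a subgroup of OC(Γ) (i.e., it contains the identity and is closed under composition and inverses) if and only if for all T₁, T₂ ∈ OC(x+Γ) that are reflections (orientation-reversing, of the form w ↦ u·conj(w) with |u| = 1), the rotation T₁ ∘ T₂ belongs to SOC(x+Γ). -/
open Pointwise Complex ComplexConjugate

open GaussianInt

local notation "ℤ[i]" => GaussianInt

lemma memZi {w : ℂ} : w ∈ Zi ↔ ∃ g : ℤ[i], toComplex g = w := by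
  simp [Zi]

lemma toC_mem (g : ℤ[i]) : toComplex g ∈ Zi := memZi.mpr ⟨g, rfl⟩

lemma mem_shifted {x w : ℂ} : w ∈ shiftedZi x ↔ ∃ g : ℤ[i], w = x + toComplex g := by
  constructor
  · rintro ⟨z, hz, rfl⟩
    obtain ⟨g, rfl⟩ := memZi.mp hz
    exact ⟨g, rfl⟩
  · rintro ⟨g, rfl⟩
    exact ⟨toComplex g, toC_mem g, rfl⟩

instance : Infinite ↥Zi :=
  Infinite.of_injective (fun n : ℤ => (⟨toComplex n, toC_mem n⟩ : ↥Zi))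
    (by intro m n h
        simp only [Subtype.mk.injEq, toComplex_inj] at h
        exact_mod_cast h)

lemma relindex_aZi {a : ℤ[i]} (ha : a ≠ 0) :
    (Zi.map (AddMonoidHom.mulLeft (toComplex a))).relIndex Zi ≠ 0 := by
  set n : ℕ := a.norm.natAbs with hn
  have hnpos : 0 < n := by
    have h1 := norm_pos.mpr ha
    omega
  have handvd : a ∣ ((n : ℤ) : ℤ[i]) := by
    rw [hn, abs_natCast_norm, Zsqrtd.norm_eq_mul_conj]
    exact ⟨star a, rfl⟩
  set H := (Zi.map (AddMonoidHom.mulLeft (toComplex a))).addSubgroupOf Zi with hH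
  have h0n : (0 : ℤ) < (n : ℤ) := by exact_mod_cast hnpos
  have hFsurj : Function.Surjective
      (fun p : Fin n × Fin n =>
        (QuotientAddGroup.mk ⟨toComplex ⟨(p.1 : ℤ), (p.2 : ℤ)⟩, toC_mem _⟩ : ↥Zi ⧸ H)) := by
    intro y
    obtain ⟨z, rfl⟩ := QuotientAddGroup.mk_surjective y
    obtain ⟨g, hg⟩ := memZi.mp z.2
    set r₁ : ℤ := g.re % (n : ℤ) with hr₁
    set r₂ : ℤ := g.im % (n : ℤ) with hr₂
    have hr₁0 : 0 ≤ r₁ := Int.emod_nonneg _ (ne_of_gt h0n)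
    have hr₁lt : r₁ < (n : ℤ) := Int.emod_lt_of_pos _ h0n
    have hr₂0 : 0 ≤ r₂ := Int.emod_nonneg _ (ne_of_gt h0n)
    have hr₂lt : r₂ < (n : ℤ) := Int.emod_lt_of_pos _ h0n
    refine ⟨(⟨r₁.toNat, by omega⟩, ⟨r₂.toNat, by omega⟩), ?_⟩
    simp only
    have hcoe₁ : ((⟨r₁.toNat, by omega⟩ : Fin n) : ℤ) = r₁ := by
      simp [Int.toNat_of_nonneg hr₁0]
    have hcoe₂ : ((⟨r₂.toNat, by omega⟩ : Fin n) : ℤ) = r₂ := by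
      simp [Int.toNat_of_nonneg hr₂0]
    rw [QuotientAddGroup.eq]
    rw [AddSubgroup.mem_addSubgroupOf]
    set repG : ℤ[i] := ⟨r₁, r₂⟩ with hrepG
    have hdvd1 : (n : ℤ) ∣ g.re - r₁ := Int.dvd_self_sub_of_emod_eq rfl
    have hdvd2 : (n : ℤ) ∣ g.im - r₂ := Int.dvd_self_sub_of_emod_eq rfl
    obtain ⟨c₁, hc₁⟩ := hdvd1
    obtain ⟨c₂, hc₂⟩ := hdvd2
    have hfact : g - repG = ((n : ℤ) : ℤ[i]) * ⟨c₁, c₂⟩ := by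
      ext
      · simp [Zsqrtd.re_mul, hrepG]
        omega
      · simp [Zsqrtd.im_mul, hrepG]
        omega
    obtain ⟨m, hm⟩ : a ∣ g - repG := handvd.trans ⟨⟨c₁, c₂⟩, hfact⟩
    refine AddSubgroup.mem_map.mpr ⟨toComplex m, toC_mem m, ?_⟩
    have hval : toComplex a * toComplex m = -(toComplex repG) + toComplex g := by
      rw [← toComplex_mul, ← hm, toComplex_sub]
      ring
    show toComplex a * toComplex m = _
    rw [hval]
    push_cast [hcoe₁, hcoe₂]
    rw [hg]
  haveI : Finite (↥Zi ⧸ H) := Finite.of_surjective _ hFsurj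
  exact AddSubgroup.index_ne_zero_of_finite

lemma star_dvd_star {p q : ℤ[i]} (h : p ∣ q) : star p ∣ star q := by
  obtain ⟨c, rfl⟩ := h
  exact ⟨star c, by rw [star_mul']⟩

lemma prime_star {p : ℤ[i]} (hp : Prime p) : Prime (star p) := by
  refine ⟨by simpa using hp.1, by simpa using hp.2.1, ?_⟩
  intro a b hab
  have h1 : p ∣ star a * star b := by
    have := star_dvd_star hab
    rwa [star_star, star_mul'] at this
  rcases hp.2.2 _ _ h1 with h | h
  · exact Or.inl (by simpa using star_dvd_star h)
  · exact Or.inr (by simpa using star_dvd_star h)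

lemma dvd_of_dvd_unit_mul {ε y z : ℤ[i]} (hε : IsUnit ε) (h : z ∣ ε * y) : z ∣ y := by
  obtain ⟨v, hv⟩ := hε.exists_left_inv
  obtain ⟨c, hc⟩ := h
  refine ⟨v * c, ?_⟩
  calc y = v * (ε * y) := by rw [← mul_assoc, hv, one_mul]
    _ = v * (z * c) := by rw [hc]
    _ = z * (v * c) := by ring

lemma coprime_parts {l z : ℤ[i]} (hz : z ≠ 0) :
    ∃ d A B : ℤ[i], d ≠ 0 ∧ B ≠ 0 ∧ l = d * A ∧ z = d * B ∧ IsCoprime A B := by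
  classical
  set d := EuclideanDomain.gcd l z with hd
  have hdl : d ∣ l := EuclideanDomain.gcd_dvd_left l z
  have hdz : d ∣ z := EuclideanDomain.gcd_dvd_right l z
  have hdne : d ≠ 0 := fun h => hz ((EuclideanDomain.gcd_eq_zero_iff.mp h).2)
  obtain ⟨A, hA⟩ := hdl
  obtain ⟨B, hB⟩ := hdz
  have hBne : B ≠ 0 := by rintro rfl; rw [mul_zero] at hB; exact hz hB
  refine ⟨d, A, B, hdne, hBne, hA, hB, ?_⟩
  obtain ⟨p, q, hbez⟩ : ∃ p q : ℤ[i], d = l * p + z * q :=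
    ⟨EuclideanDomain.gcdA l z, EuclideanDomain.gcdB l z, EuclideanDomain.gcd_eq_gcd_ab l z⟩
  rw [hA, hB] at hbez
  have hthis : d * 1 = d * (A * p + B * q) := by rw [mul_one]; nth_rewrite 1 [hbez]; ring
  have h1 : 1 = A * p + B * q := mul_left_cancel₀ hdne hthis
  exact ⟨p, q, by rw [h1]; ring⟩

lemma isCoprime_of_no_prime {d t : ℤ[i]} (hd : d ≠ 0)
    (h : ∀ p : ℤ[i], Prime p → p ∣ d → p ∣ t → False) : IsCoprime d t := by
  classical
  apply EuclideanDomain.isCoprime_of_dvd (fun hc => hd hc.1)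
  intro z hznu hz0 hzd hzt
  obtain ⟨p, hpirr, hpz⟩ := WfDvdMonoid.exists_irreducible_factor hznu hz0
  exact h p hpirr.prime (hpz.trans hzd) (hpz.trans hzt)

lemma not_dvd_pair {p t a b : ℤ[i]} (hp : Prime p) (hpt : p ∣ t) (htba : t ∣ b - a)
    (hcop : IsCoprime a b) : ¬p ∣ a ∧ ¬p ∣ b := by
  have hpd : p ∣ b - a := hpt.trans htba
  constructor
  · intro ha
    have hb : p ∣ b := by simpa using dvd_add hpd ha
    exact hp.not_unit (hcop.isUnit_of_dvd' ha hb)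
  · intro hb
    have ha : p ∣ a := by
      have := dvd_sub hb hpd
      simpa using this
    exact hp.not_unit (hcop.isUnit_of_dvd' ha hb)

lemma norm_structure {u : ℂ} {a b : ℤ[i]} (hu : ‖u‖ = 1) (hb : b ≠ 0)
    (hba : toComplex b * u = toComplex a) (hcop : IsCoprime a b) :
    ∃ ε : ℤ[i], IsUnit ε ∧ star a = ε * b ∧ star b = ε * a := by
  have hnorm : a.norm = b.norm := by
    have h1 : ‖toComplex a‖ = ‖toComplex b‖ := by
      rw [← hba, norm_mul, hu, mul_one]
    have h2 : (a.norm : ℝ) = (b.norm : ℝ) := by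
      rw [intCast_real_norm, intCast_real_norm]
      rw [Complex.normSq_eq_norm_sq, Complex.normSq_eq_norm_sq, h1]
    exact_mod_cast h2
  have hbnz : b.norm ≠ 0 := fun h => hb (norm_eq_zero.mp h)
  have hdvd : b ∣ a * star a := by
    have h3 : a * star a = b * star b := by
      have := Zsqrtd.norm_eq_mul_conj a
      have h4 := Zsqrtd.norm_eq_mul_conj b
      rw [← this, ← h4, hnorm]
    exact ⟨star b, h3⟩
  have hbsa : b ∣ star a := (hcop.symm.dvd_of_dvd_mul_left hdvd)
  obtain ⟨e, he⟩ := hbsa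
  have hnorme : e.norm = 1 := by
    have h5 : (star a).norm = b.norm * e.norm := by rw [he, Zsqrtd.norm_mul]
    rw [Zsqrtd.norm_conj, hnorm] at h5
    have := mul_left_cancel₀ hbnz (by rw [← h5, mul_one] : b.norm * 1 = b.norm * e.norm)
    omega
  have heu : IsUnit e := by
    rw [← Zsqrtd.norm_eq_one_iff]
    omega
  have hee : e * star e = 1 := by
    have := Zsqrtd.norm_eq_mul_conj e
    rw [hnorme] at this
    exact_mod_cast this.symm
  refine ⟨e, heu, by rw [he]; ring, ?_⟩
  have h6 : a = star b * star e := by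
    have := congrArg star he
    rwa [star_star, star_mul'] at this
  calc star b = star b * (star e * e) := by rw [mul_comm (star e) e, hee, mul_one]
    _ = (star b * star e) * e := by ring
    _ = e * a := by rw [← h6]; ring

def RotCond (u x : ℂ) : Prop :=
  ∃ a b : ℤ[i], b ≠ 0 ∧ IsCoprime a b ∧ toComplex b * u = toComplex a ∧
    ∃ g : ℤ[i], (toComplex b - toComplex a) * x = toComplex g

def ReflCond (u x : ℂ) : Prop :=
  ∃ a b : ℤ[i], b ≠ 0 ∧ IsCoprime a b ∧ toComplex b * u = toComplex a ∧
    ∃ g : ℤ[i], toComplex b * x - toComplex a * conj x = toComplex g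

lemma inter_coset {x c : ℂ} (F : ℂ →+ ℂ) (hc1 : c ∈ shiftedZi x)
    (hc2 : c ∈ ⇑F '' shiftedZi x) :
    shiftedZi x ∩ (⇑F '' shiftedZi x) = c +ᵥ ((Zi ⊓ Zi.map F : AddSubgroup ℂ) : Set ℂ) := by
  obtain ⟨h₁, hh₁⟩ := mem_shifted.mp hc1
  obtain ⟨w₂, hw₂, hFw₂⟩ := hc2
  obtain ⟨h₂, hh₂⟩ := mem_shifted.mp hw₂
  ext y
  constructor
  · rintro ⟨hy1, w, hw, hFw⟩
    obtain ⟨g₁, hg₁⟩ := mem_shifted.mp hy1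
    obtain ⟨g₂, hg₂⟩ := mem_shifted.mp hw
    refine Set.mem_vadd_set.mpr ⟨y - c, ⟨?_, ?_⟩, by simp⟩
    · refine memZi.mpr ⟨g₁ - h₁, ?_⟩
      rw [toComplex_sub, hg₁, hh₁]; ring
    · refine AddSubgroup.mem_map.mpr ⟨toComplex (g₂ - h₂), toC_mem _, ?_⟩
      have e1 : F (x + toComplex g₂) - F (x + toComplex h₂) = y - c := by
        rw [← hg₂, hFw, ← hh₂, hFw₂]
      rw [← e1, ← map_sub]
      congr 1
      rw [toComplex_sub]
      ring
  · intro hy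
    obtain ⟨lam, hlam, hl⟩ := Set.mem_vadd_set.mp hy
    obtain ⟨hlamZi, hlamMap⟩ := SetLike.mem_coe.mp hlam
    obtain ⟨l, hll⟩ := memZi.mp hlamZi
    obtain ⟨mu, hmuZi, hmul⟩ := AddSubgroup.mem_map.mp hlamMap
    obtain ⟨m, hm⟩ := memZi.mp hmuZi
    have hy' : y = c + lam := by rw [← hl]; simp
    constructor
    · refine mem_shifted.mpr ⟨h₁ + l, ?_⟩
      rw [toComplex_add, hy', hh₁, hll]; ring
    · refine ⟨x + toComplex (h₂ + m), mem_shifted.mpr ⟨h₂ + m, rfl⟩, ?_⟩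
      rw [toComplex_add, ← add_assoc, ← hh₂, map_add, hFw₂, hm, hmul, hy']

lemma toC_ne_zero {a : ℤ[i]} (ha : a ≠ 0) : toComplex a ≠ 0 := fun h => ha (toComplex_eq_zero.mp h)

lemma exists_ne_zero_mem {Λ : AddSubgroup ℂ} (hΛZi : Λ ≤ Zi) (hrel : Λ.relIndex Zi ≠ 0) :
    ∃ lam : ℂ, lam ∈ Λ ∧ lam ≠ 0 := by
  by_contra hcon
  push_neg at hcon
  have hbot : Λ = ⊥ := by
    rw [AddSubgroup.eq_bot_iff_forall]
    exact hcon
  rw [hbot, AddSubgroup.relIndex_bot_left] at hrel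
  exact hrel Nat.card_eq_zero_of_infinite

lemma rot_mem_iff {x u : ℂ} (hu : ‖u‖ = 1) {f : ℂ → ℂ} (hf : ∀ w, f w = u * w) :
    f ∈ OCs x ↔ RotCond u x := by
  have hu0 : u ≠ 0 := fun h => by simp [h] at hu
  constructor
  · rintro ⟨-, c, hc, Λ, hΛZi, hrel, heq⟩
    have hc2 : c ∈ shiftedZi x ∩ f '' shiftedZi x := by
      rw [heq]; exact Set.mem_vadd_set.mpr ⟨0, by simpa using Λ.zero_mem, by simp⟩
    obtain ⟨hcs, hcf⟩ := hc2
    obtain ⟨h₁, hh₁⟩ := mem_shifted.mp hcs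
    obtain ⟨w₀, hw₀s, hw₀⟩ := hcf
    obtain ⟨m₀, hm₀⟩ := mem_shifted.mp hw₀s
    obtain ⟨lam, hlamΛ, hlam0⟩ := exists_ne_zero_mem hΛZi hrel
    obtain ⟨l, hll⟩ := memZi.mp (hΛZi hlamΛ)
    have hclam : c + lam ∈ shiftedZi x ∩ f '' shiftedZi x := by
      rw [heq]; exact Set.mem_vadd_set.mpr ⟨lam, by simpa using hlamΛ, by simp⟩
    obtain ⟨-, w₁, hw₁s, hw₁⟩ := hclam
    obtain ⟨m₁, hm₁⟩ := mem_shifted.mp hw₁s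
    have hlameq : lam = u * toComplex (m₁ - m₀) := by
      have e1 : f w₁ - f w₀ = lam := by rw [hw₁, hw₀]; ring
      rw [hf, hf, hm₁, hm₀] at e1
      rw [toComplex_sub]
      linear_combination -e1
    have hz0 : m₁ - m₀ ≠ 0 := by
      intro h
      rw [h, toComplex_zero, mul_zero] at hlameq
      exact hlam0 hlameq
    obtain ⟨d, A, B, hd0, hB0, hlfact, hzfact, hcop⟩ := coprime_parts (l := l) hz0
    have hBu : toComplex B * u = toComplex A := by
      have e2 : toComplex (m₁ - m₀) * u = toComplex l := by rw [hll, hlameq]; ring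
      rw [hzfact, hlfact, toComplex_mul, toComplex_mul] at e2
      exact mul_left_cancel₀ (toC_ne_zero hd0) (by linear_combination e2)
    refine ⟨A, B, hB0, hcop, hBu, A * m₀ - B * h₁, ?_⟩
    have hxeq : x + toComplex h₁ = u * (x + toComplex m₀) := by
      rw [← hh₁, ← hm₀, ← hw₀, hf]
    rw [toComplex_sub, toComplex_mul, toComplex_mul]
    linear_combination toComplex B * hxeq + (x + toComplex m₀) * hBu
  · rintro ⟨a, b, hb0, hcop, hba, g, hg⟩
    have ha0 : a ≠ 0 := by
      intro h
      rw [h, toComplex_zero] at hba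
      exact hu0 (by
        rcases mul_eq_zero.mp hba with h' | h'
        · exact absurd h' (toC_ne_zero hb0)
        · exact h')
    obtain ⟨p, q, hpq⟩ := hcop
    have hpq' : toComplex p * toComplex a + toComplex q * toComplex b = 1 := by
      have := congrArg toComplex hpq
      rwa [toComplex_add, toComplex_mul, toComplex_mul, toComplex_one] at this
    set c := x + toComplex (-(q * g)) with hcdef
    have hc_s : c ∈ shiftedZi x := mem_shifted.mpr ⟨-(q * g), rfl⟩
    have hceq : c = f (x + toComplex (p * g)) := by
      rw [hf]
      apply mul_left_cancel₀ (toC_ne_zero hb0)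
      rw [hcdef, toComplex_neg, toComplex_mul, toComplex_mul]
      linear_combination hg - toComplex g * hpq' - (x + toComplex p * toComplex g) * hba
    have hcf : c ∈ f '' shiftedZi x := ⟨x + toComplex (p * g), mem_shifted.mpr ⟨p * g, rfl⟩, hceq.symm⟩
    set F : ℂ →+ ℂ := AddMonoidHom.mulLeft u with hFdef
    have hfF : f = ⇑F := funext fun w => by rw [hf]; rfl
    refine ⟨⟨rotation ⟨u, mem_sphere_zero_iff_norm.2 hu⟩, funext fun w => by
      rw [hf]; rfl⟩, c, hc_s, Zi ⊓ Zi.map F, inf_le_left, ?_, ?_⟩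
    · have hle : Zi.map (AddMonoidHom.mulLeft (toComplex a)) ≤ Zi ⊓ Zi.map F := by
        rintro y hy
        obtain ⟨w, hwZi, hwy⟩ := AddSubgroup.mem_map.mp hy
        obtain ⟨m, rfl⟩ := memZi.mp hwZi
        have hyval : y = toComplex (a * m) := by
          rw [← hwy, toComplex_mul]; rfl
        constructor
        · rw [hyval]; exact toC_mem _
        · refine AddSubgroup.mem_map.mpr ⟨toComplex (b * m), toC_mem _, ?_⟩
          show u * toComplex (b * m) = y
          rw [hyval, toComplex_mul, toComplex_mul]
          linear_combination toComplex m * hba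
      have hdvd := AddSubgroup.relIndex_dvd_of_le_left Zi hle
      intro h0
      exact relindex_aZi ha0 (zero_dvd_iff.mp (h0 ▸ hdvd))
    · rw [hfF]
      exact inter_coset F hc_s (hfF ▸ hcf)

lemma refl_mem_iff {x u : ℂ} (hu : ‖u‖ = 1) {f : ℂ → ℂ} (hf : ∀ w, f w = u * conj w) :
    f ∈ OCs x ↔ ReflCond u x := by
  have hu0 : u ≠ 0 := fun h => by simp [h] at hu
  constructor
  · rintro ⟨-, c, hc, Λ, hΛZi, hrel, heq⟩
    have hc2 : c ∈ shiftedZi x ∩ f '' shiftedZi x := by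
      rw [heq]; exact Set.mem_vadd_set.mpr ⟨0, by simpa using Λ.zero_mem, by simp⟩
    obtain ⟨hcs, hcf⟩ := hc2
    obtain ⟨h₁, hh₁⟩ := mem_shifted.mp hcs
    obtain ⟨w₀, hw₀s, hw₀⟩ := hcf
    obtain ⟨m₀, hm₀⟩ := mem_shifted.mp hw₀s
    obtain ⟨lam, hlamΛ, hlam0⟩ := exists_ne_zero_mem hΛZi hrel
    obtain ⟨l, hll⟩ := memZi.mp (hΛZi hlamΛ)
    have hclam : c + lam ∈ shiftedZi x ∩ f '' shiftedZi x := by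
      rw [heq]; exact Set.mem_vadd_set.mpr ⟨lam, by simpa using hlamΛ, by simp⟩
    obtain ⟨-, w₁, hw₁s, hw₁⟩ := hclam
    obtain ⟨m₁, hm₁⟩ := mem_shifted.mp hw₁s
    have hlameq : lam = u * toComplex (star (m₁ - m₀)) := by
      have e1 : f w₁ - f w₀ = lam := by rw [hw₁, hw₀]; ring
      rw [hf, hf, hm₁, hm₀] at e1
      rw [toComplex_star, toComplex_sub]
      simp only [map_add] at e1
      simp only [map_sub]
      linear_combination -e1
    have hz0 : star (m₁ - m₀) ≠ 0 := by
      intro h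
      rw [h, toComplex_zero, mul_zero] at hlameq
      exact hlam0 hlameq
    obtain ⟨d, A, B, hd0, hB0, hlfact, hzfact, hcop⟩ := coprime_parts (l := l) hz0
    have hBu : toComplex B * u = toComplex A := by
      have e2 : toComplex (star (m₁ - m₀)) * u = toComplex l := by rw [hll, hlameq]; ring
      rw [hzfact, hlfact, toComplex_mul, toComplex_mul] at e2
      exact mul_left_cancel₀ (toC_ne_zero hd0) (by linear_combination e2)
    refine ⟨A, B, hB0, hcop, hBu, A * star m₀ - B * h₁, ?_⟩
    have hxeq : x + toComplex h₁ = u * (conj x + toComplex (star m₀)) := by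
      rw [← hh₁, ← hw₀, hf, hm₀]
      rw [toComplex_star, map_add]
    rw [toComplex_sub, toComplex_mul, toComplex_mul]
    linear_combination toComplex B * hxeq + (conj x + toComplex (star m₀)) * hBu
  · rintro ⟨a, b, hb0, hcop, hba, g, hg⟩
    have ha0 : a ≠ 0 := by
      intro h
      rw [h, toComplex_zero] at hba
      exact hu0 (by
        rcases mul_eq_zero.mp hba with h' | h'
        · exact absurd h' (toC_ne_zero hb0)
        · exact h')
    obtain ⟨p, q, hpq⟩ := hcop
    have hpq' : toComplex p * toComplex a + toComplex q * toComplex b = 1 := by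
      have := congrArg toComplex hpq
      rwa [toComplex_add, toComplex_mul, toComplex_mul, toComplex_one] at this
    set c := x + toComplex (-(q * g)) with hcdef
    have hc_s : c ∈ shiftedZi x := mem_shifted.mpr ⟨-(q * g), rfl⟩
    have hconj : conj (x + toComplex (star (p * g))) = conj x + toComplex (p * g) := by
      rw [map_add, toComplex_star, Complex.conj_conj]
    have hceq : c = f (x + toComplex (star (p * g))) := by
      rw [hf, hconj]
      apply mul_left_cancel₀ (toC_ne_zero hb0)
      rw [hcdef, toComplex_neg, toComplex_mul, toComplex_mul]
      linear_combination hg - toComplex g * hpq' - (conj x + toComplex p * toComplex g) * hba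
    have hcf : c ∈ f '' shiftedZi x :=
      ⟨x + toComplex (star (p * g)), mem_shifted.mpr ⟨star (p * g), rfl⟩, hceq.symm⟩
    set F : ℂ →+ ℂ := AddMonoidHom.mk' (fun w => u * conj w)
      (by intro a b; simp only [map_add]; ring) with hFdef
    have hfF : f = ⇑F := funext fun w => by rw [hf]; rfl
    refine ⟨⟨conjLIE.trans (rotation ⟨u, mem_sphere_zero_iff_norm.2 hu⟩), funext fun w => by
      rw [LinearIsometryEquiv.trans_apply, conjLIE_apply, hf]; rfl⟩,
      c, hc_s, Zi ⊓ Zi.map F, inf_le_left, ?_, ?_⟩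
    · have hle : Zi.map (AddMonoidHom.mulLeft (toComplex a)) ≤ Zi ⊓ Zi.map F := by
        rintro y hy
        obtain ⟨w, hwZi, hwy⟩ := AddSubgroup.mem_map.mp hy
        obtain ⟨m, rfl⟩ := memZi.mp hwZi
        have hyval : y = toComplex (a * m) := by
          rw [← hwy, toComplex_mul]; rfl
        constructor
        · rw [hyval]; exact toC_mem _
        · refine AddSubgroup.mem_map.mpr ⟨toComplex (star (b * m)), toC_mem _, ?_⟩
          show u * conj (toComplex (star (b * m))) = y
          rw [toComplex_star, Complex.conj_conj, hyval, toComplex_mul, toComplex_mul]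
          linear_combination toComplex m * hba
      have hdvd := AddSubgroup.relIndex_dvd_of_le_left Zi hle
      intro h0
      exact relindex_aZi ha0 (zero_dvd_iff.mp (h0 ▸ hdvd))
    · rw [hfF]
      exact inter_coset F hc_s (hfF ▸ hcf)

lemma rationalize {x : ℂ} {a b g : ℤ[i]} (hab : a ≠ b)
    (hg : (toComplex b - toComplex a) * x = toComplex g) :
    ∃ s t : ℤ[i], t ≠ 0 ∧ IsCoprime s t ∧ toComplex t * x = toComplex s := by
  have hz : b - a ≠ 0 := sub_ne_zero.mpr (Ne.symm hab)
  obtain ⟨d, S, T, hd0, hT0, hgf, hzf, hcop⟩ := coprime_parts (l := g) hz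
  refine ⟨S, T, hT0, hcop, ?_⟩
  have h1 : toComplex (b - a) * x = toComplex g := by rw [toComplex_sub]; exact hg
  rw [hzf, hgf, toComplex_mul, toComplex_mul] at h1
  exact mul_left_cancel₀ (toC_ne_zero hd0) (by linear_combination h1)

lemma rot_st {x : ℂ} {s t a b g : ℤ[i]} (hst : IsCoprime s t)
    (hx : toComplex t * x = toComplex s)
    (hg : (toComplex b - toComplex a) * x = toComplex g) : t ∣ b - a := by
  have h1 : toComplex ((b - a) * s) = toComplex (t * g) := by
    rw [toComplex_mul, toComplex_mul, toComplex_sub, ← hx]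
    linear_combination toComplex t * hg
  have h2 : (b - a) * s = t * g := toComplex_inj.mp h1
  exact hst.symm.dvd_of_dvd_mul_right ⟨g, h2⟩

lemma conj_frac {x : ℂ} {s t : ℤ[i]} (hx : toComplex t * x = toComplex s) :
    toComplex (star t) * (starRingEnd ℂ) x = toComplex (star s) := by
  have h := congrArg (starRingEnd ℂ) hx
  rw [map_mul] at h
  rw [toComplex_star, toComplex_star]
  exact h

lemma refl_st {x : ℂ} {s t a b g : ℤ[i]}
    (hx : toComplex t * x = toComplex s)
    (hg : toComplex b * x - toComplex a * (starRingEnd ℂ) x = toComplex g) :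
    t * star t ∣ b * s * star t - a * star s * t := by
  have hxc := conj_frac hx
  refine ⟨g, ?_⟩
  apply toComplex_inj.mp
  simp only [toComplex_sub, toComplex_mul]
  linear_combination (-(toComplex b * toComplex (star t))) * hx +
    (toComplex a * toComplex t) * hxc + (toComplex t * toComplex (star t)) * hg

lemma rotcond_one (x : ℂ) : RotCond 1 x :=
  ⟨1, 1, one_ne_zero, isCoprime_one_left, by rw [mul_one], 0, by simp⟩

lemma NT1 {x u₁ u₂ : ℂ} (h1 : RotCond u₁ x) (h2 : RotCond u₂ x) : RotCond (u₁ * u₂) x := by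
  obtain ⟨a₁, b₁, hb₁, hc₁, hba₁, g₁, hg₁⟩ := h1
  obtain ⟨a₂, b₂, hb₂, hc₂, hba₂, g₂, hg₂⟩ := h2
  by_cases he₁ : a₁ = b₁
  · have hu₁ : u₁ = 1 := by
      apply mul_left_cancel₀ (toC_ne_zero hb₁)
      rw [hba₁, he₁, mul_one]
    rw [hu₁, one_mul]
    exact ⟨a₂, b₂, hb₂, hc₂, hba₂, g₂, hg₂⟩
  by_cases he₂ : a₂ = b₂
  · have hu₂ : u₂ = 1 := by
      apply mul_left_cancel₀ (toC_ne_zero hb₂)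
      rw [hba₂, he₂, mul_one]
    rw [hu₂, mul_one]
    exact ⟨a₁, b₁, hb₁, hc₁, hba₁, g₁, hg₁⟩
  obtain ⟨s, t, ht0, hst, hx⟩ := rationalize he₁ hg₁
  have hd₁ : t ∣ b₁ - a₁ := rot_st hst hx hg₁
  have hd₂ : t ∣ b₂ - a₂ := rot_st hst hx hg₂
  obtain ⟨d, A, B, hd0, hB0, hAf, hBf, hcop⟩ :=
    coprime_parts (l := a₁ * a₂) (mul_ne_zero hb₁ hb₂)
  have hcopdt : IsCoprime d t := by
    apply isCoprime_of_no_prime hd0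
    intro p hp hpd hpt
    obtain ⟨hna₁, hnb₁⟩ := not_dvd_pair hp hpt hd₁ hc₁
    obtain ⟨hna₂, hnb₂⟩ := not_dvd_pair hp hpt hd₂ hc₂
    rcases hp.dvd_mul.mp (hpd.trans ⟨A, hAf⟩) with h | h
    · exact hna₁ h
    · exact hna₂ h
  have ht_dvd : t ∣ b₁ * b₂ - a₁ * a₂ := by
    have hre : b₁ * b₂ - a₁ * a₂ = b₁ * (b₂ - a₂) + (b₁ - a₁) * a₂ := by ring
    rw [hre]
    exact dvd_add (Dvd.dvd.mul_left hd₂ b₁) (hd₁.mul_right a₂)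
  have htBA : t ∣ B - A := by
    have h3 : t ∣ d * (B - A) := by
      have hre : d * (B - A) = b₁ * b₂ - a₁ * a₂ := by rw [mul_sub, ← hAf, ← hBf]
      rw [hre]; exact ht_dvd
    exact hcopdt.symm.dvd_of_dvd_mul_left h3
  obtain ⟨cq, hcq⟩ := htBA
  refine ⟨A, B, hB0, hcop, ?_, cq * s, ?_⟩
  · apply mul_left_cancel₀ (toC_ne_zero hd0)
    have e1 : toComplex (b₁ * b₂) * (u₁ * u₂) = toComplex (a₁ * a₂) := by
      rw [toComplex_mul, toComplex_mul]
      linear_combination toComplex b₂ * u₂ * hba₁ + toComplex a₁ * hba₂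
    rw [hAf, hBf, toComplex_mul, toComplex_mul] at e1
    linear_combination e1
  · rw [← toComplex_sub, hcq, toComplex_mul, toComplex_mul]
    linear_combination toComplex cq * hx

lemma NT2 {x u₁ u₂ : ℂ} (hu₁ : ‖u₁‖ = 1) (h1 : RotCond u₁ x) (h2 : ReflCond u₂ x) :
    ReflCond (u₁ * u₂) x := by
  obtain ⟨a₁, b₁, hb₁, hc₁, hba₁, g₁, hg₁⟩ := h1
  obtain ⟨a₂, b₂, hb₂, hc₂, hba₂, g₂, hg₂⟩ := h2
  by_cases he₁ : a₁ = b₁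
  · have hu1 : u₁ = 1 := by
      apply mul_left_cancel₀ (toC_ne_zero hb₁)
      rw [hba₁, he₁, mul_one]
    rw [hu1, one_mul]
    exact ⟨a₂, b₂, hb₂, hc₂, hba₂, g₂, hg₂⟩
  obtain ⟨s, t, ht0, hst, hx⟩ := rationalize he₁ hg₁
  have hxc := conj_frac hx
  have hd₁ : t ∣ b₁ - a₁ := rot_st hst hx hg₁
  have hd₂ : t * star t ∣ b₂ * s * star t - a₂ * star s * t := refl_st hx hg₂
  obtain ⟨ε, hεu, hεa, hεb⟩ := norm_structure hu₁ hb₁ hba₁ hc₁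
  have hd₁' : star t ∣ b₁ - a₁ := by
    have h4 : star t ∣ star (b₁ - a₁) := star_dvd_star hd₁
    have h5 : star (b₁ - a₁) = ε * (a₁ - b₁) := by rw [star_sub, hεa, hεb]; ring
    rw [h5] at h4
    have h6 : star t ∣ a₁ - b₁ := dvd_of_dvd_unit_mul hεu h4
    simpa [neg_sub] using dvd_neg.mpr h6
  have hts0 : star t ≠ 0 := fun h => ht0 (star_eq_zero.mp h)
  obtain ⟨d, A, B, hd0, hB0, hAf, hBf, hcop⟩ :=
    coprime_parts (l := a₁ * a₂) (mul_ne_zero hb₁ hb₂)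
  have hda : d ∣ a₁ * a₂ := ⟨A, hAf⟩
  have hdb : d ∣ b₁ * b₂ := ⟨B, hBf⟩
  have hcoptt : IsCoprime d (t * star t) := by
    apply isCoprime_of_no_prime hd0
    intro p hp hpd hptt
    rcases hp.dvd_mul.mp hptt with hpt | hpts
    · obtain ⟨hna₁, hnb₁⟩ := not_dvd_pair hp hpt hd₁ hc₁
      have hpa₂ : p ∣ a₂ := (hp.dvd_mul.mp (hpd.trans hda)).resolve_left hna₁
      have hpb₂ : p ∣ b₂ := (hp.dvd_mul.mp (hpd.trans hdb)).resolve_left hnb₁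
      exact hp.not_unit (hc₂.isUnit_of_dvd' hpa₂ hpb₂)
    · have hqp : Prime (star p) := prime_star hp
      have hqt : star p ∣ t := by simpa using star_dvd_star hpts
      obtain ⟨hna₁, hnb₁⟩ := not_dvd_pair hqp hqt hd₁ hc₁
      have hq_sa : star p ∣ ε * (b₁ * star a₂) := by
        have h7 := star_dvd_star (hpd.trans hda)
        rw [star_mul', hεa] at h7
        have hre : ε * b₁ * star a₂ = ε * (b₁ * star a₂) := by ring
        rwa [hre] at h7
      have hq_sb : star p ∣ ε * (a₁ * star b₂) := by
        have h7 := star_dvd_star (hpd.trans hdb)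
        rw [star_mul', hεb] at h7
        have hre : ε * a₁ * star b₂ = ε * (a₁ * star b₂) := by ring
        rwa [hre] at h7
      have hqa₂ : star p ∣ star a₂ :=
        (hqp.dvd_mul.mp (dvd_of_dvd_unit_mul hεu hq_sa)).resolve_left hnb₁
      have hqb₂ : star p ∣ star b₂ :=
        (hqp.dvd_mul.mp (dvd_of_dvd_unit_mul hεu hq_sb)).resolve_left hna₁
      have hpa₂ : p ∣ a₂ := by simpa using star_dvd_star hqa₂
      have hpb₂ : p ∣ b₂ := by simpa using star_dvd_star hqb₂
      exact hp.not_unit (hc₂.isUnit_of_dvd' hpa₂ hpb₂)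
  have hM : t * star t ∣ b₁ * b₂ * s * star t - a₁ * a₂ * star s * t := by
    have hM1 : t * star t ∣ b₁ * (b₂ * s * star t - a₂ * star s * t) := Dvd.dvd.mul_left hd₂ b₁
    have hM2 : t * star t ∣ (b₁ - a₁) * (a₂ * star s * t) := by
      obtain ⟨cc, hcc⟩ := hd₁'
      exact ⟨cc * (a₂ * star s), by rw [hcc]; ring⟩
    have hre : b₁ * b₂ * s * star t - a₁ * a₂ * star s * t =
        b₁ * (b₂ * s * star t - a₂ * star s * t) + (b₁ - a₁) * (a₂ * star s * t) := by ring
    rw [hre]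
    exact dvd_add hM1 hM2
  have hMfin : t * star t ∣ B * s * star t - A * star s * t := by
    have hMd : t * star t ∣ d * (B * s * star t - A * star s * t) := by
      have hre : d * (B * s * star t - A * star s * t) =
          b₁ * b₂ * s * star t - a₁ * a₂ * star s * t := by
        rw [hAf, hBf]; ring
      rw [hre]; exact hM
    exact hcoptt.symm.dvd_of_dvd_mul_left hMd
  obtain ⟨gg, hgg⟩ := hMfin
  refine ⟨A, B, hB0, hcop, ?_, gg, ?_⟩
  · apply mul_left_cancel₀ (toC_ne_zero hd0)
    have e1 : toComplex (b₁ * b₂) * (u₁ * u₂) = toComplex (a₁ * a₂) := by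
      rw [toComplex_mul, toComplex_mul]
      linear_combination toComplex b₂ * u₂ * hba₁ + toComplex a₁ * hba₂
    rw [hAf, hBf, toComplex_mul, toComplex_mul] at e1
    linear_combination e1
  · have e2 : toComplex B * toComplex s * toComplex (star t) -
        toComplex A * toComplex (star s) * toComplex t =
        toComplex t * toComplex (star t) * toComplex gg := by
      have h9 := congrArg toComplex hgg
      simp only [toComplex_sub, toComplex_mul] at h9
      linear_combination h9
    apply mul_left_cancel₀ (mul_ne_zero (toC_ne_zero ht0) (toC_ne_zero hts0))
    linear_combination e2 + toComplex B * toComplex (star t) * hx - toComplex A * toComplex t * hxc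

lemma NT3 {x u₁ u₂ : ℂ} (hu₂ : ‖u₂‖ = 1) (h1 : ReflCond u₁ x) (h2 : RotCond u₂ x) :
    ReflCond (u₁ * conj u₂) x := by
  obtain ⟨a₁, b₁, hb₁, hc₁, hba₁, g₁, hg₁⟩ := h1
  obtain ⟨a₂, b₂, hb₂, hc₂, hba₂, g₂, hg₂⟩ := h2
  by_cases he₂ : a₂ = b₂
  · have hu2 : u₂ = 1 := by
      apply mul_left_cancel₀ (toC_ne_zero hb₂)
      rw [hba₂, he₂, mul_one]
    rw [hu2, map_one, mul_one]
    exact ⟨a₁, b₁, hb₁, hc₁, hba₁, g₁, hg₁⟩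
  obtain ⟨s, t, ht0, hst, hx⟩ := rationalize he₂ hg₂
  have hxc := conj_frac hx
  have hd₂ : t ∣ b₂ - a₂ := rot_st hst hx hg₂
  have hd₁ : t * star t ∣ b₁ * s * star t - a₁ * star s * t := refl_st hx hg₁
  obtain ⟨ε, hεu, hεa, hεb⟩ := norm_structure hu₂ hb₂ hba₂ hc₂
  have hts0 : star t ≠ 0 := fun h => ht0 (star_eq_zero.mp h)
  have hsb₂0 : star b₂ ≠ 0 := fun h => hb₂ (star_eq_zero.mp h)
  obtain ⟨d, A, B, hd0, hB0, hAf, hBf, hcop⟩ :=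
    coprime_parts (l := a₁ * star a₂) (mul_ne_zero hb₁ hsb₂0)
  have hda : d ∣ a₁ * star a₂ := ⟨A, hAf⟩
  have hdb : d ∣ b₁ * star b₂ := ⟨B, hBf⟩
  have hcoptt : IsCoprime d (t * star t) := by
    apply isCoprime_of_no_prime hd0
    intro p hp hpd hptt
    rcases hp.dvd_mul.mp hptt with hpt | hpts
    · obtain ⟨hna₂, hnb₂⟩ := not_dvd_pair hp hpt hd₂ hc₂
      have hnsa₂ : ¬p ∣ star a₂ := fun h => hnb₂ (dvd_of_dvd_unit_mul hεu (hεa ▸ h))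
      have hnsb₂ : ¬p ∣ star b₂ := fun h => hna₂ (dvd_of_dvd_unit_mul hεu (hεb ▸ h))
      have hpa₁ : p ∣ a₁ := (hp.dvd_mul.mp (hpd.trans hda)).resolve_right hnsa₂
      have hpb₁ : p ∣ b₁ := (hp.dvd_mul.mp (hpd.trans hdb)).resolve_right hnsb₂
      exact hp.not_unit (hc₁.isUnit_of_dvd' hpa₁ hpb₁)
    · have hqp : Prime (star p) := prime_star hp
      have hqt : star p ∣ t := by simpa using star_dvd_star hpts
      obtain ⟨hna₂, hnb₂⟩ := not_dvd_pair hqp hqt hd₂ hc₂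
      have hq_sa : star p ∣ star a₁ * a₂ := by
        have h7 := star_dvd_star (hpd.trans hda)
        rwa [star_mul', star_star] at h7
      have hq_sb : star p ∣ star b₁ * b₂ := by
        have h7 := star_dvd_star (hpd.trans hdb)
        rwa [star_mul', star_star] at h7
      have hqa₁ : star p ∣ star a₁ := (hqp.dvd_mul.mp hq_sa).resolve_right hna₂
      have hqb₁ : star p ∣ star b₁ := (hqp.dvd_mul.mp hq_sb).resolve_right hnb₂
      have hpa₁ : p ∣ a₁ := by simpa using star_dvd_star hqa₁
      have hpb₁ : p ∣ b₁ := by simpa using star_dvd_star hqb₁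
      exact hp.not_unit (hc₁.isUnit_of_dvd' hpa₁ hpb₁)
  have hM : t * star t ∣ b₁ * star b₂ * s * star t - a₁ * star a₂ * star s * t := by
    have hM1 : t * star t ∣ star b₂ * (b₁ * s * star t - a₁ * star s * t) :=
      Dvd.dvd.mul_left hd₁ _
    have hM2 : t * star t ∣ star (b₂ - a₂) * (a₁ * star s * t) := by
      obtain ⟨cc, hcc⟩ := star_dvd_star hd₂
      exact ⟨cc * (a₁ * star s), by rw [hcc]; ring⟩
    have hre : b₁ * star b₂ * s * star t - a₁ * star a₂ * star s * t =
        star b₂ * (b₁ * s * star t - a₁ * star s * t) +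
          star (b₂ - a₂) * (a₁ * star s * t) := by
      rw [star_sub]; ring
    rw [hre]
    exact dvd_add hM1 hM2
  have hMfin : t * star t ∣ B * s * star t - A * star s * t := by
    have hMd : t * star t ∣ d * (B * s * star t - A * star s * t) := by
      have hre : d * (B * s * star t - A * star s * t) =
          b₁ * star b₂ * s * star t - a₁ * star a₂ * star s * t := by
        rw [hAf, hBf]; ring
      rw [hre]; exact hM
    exact hcoptt.symm.dvd_of_dvd_mul_left hMd
  obtain ⟨gg, hgg⟩ := hMfin
  have hba₂' : toComplex (star b₂) * conj u₂ = toComplex (star a₂) := by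
    have h := congrArg (starRingEnd ℂ) hba₂
    rw [map_mul] at h
    rw [toComplex_star, toComplex_star]
    exact h
  refine ⟨A, B, hB0, hcop, ?_, gg, ?_⟩
  · apply mul_left_cancel₀ (toC_ne_zero hd0)
    have e1 : toComplex (b₁ * star b₂) * (u₁ * conj u₂) = toComplex (a₁ * star a₂) := by
      rw [toComplex_mul, toComplex_mul]
      linear_combination toComplex (star b₂) * conj u₂ * hba₁ + toComplex a₁ * hba₂'
    rw [hAf, hBf, toComplex_mul, toComplex_mul] at e1
    linear_combination e1
  · have e2 : toComplex B * toComplex s * toComplex (star t) -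
        toComplex A * toComplex (star s) * toComplex t =
        toComplex t * toComplex (star t) * toComplex gg := by
      have h9 := congrArg toComplex hgg
      simp only [toComplex_sub, toComplex_mul] at h9
      linear_combination h9
    apply mul_left_cancel₀ (mul_ne_zero (toC_ne_zero ht0) (toC_ne_zero hts0))
    linear_combination e2 + toComplex B * toComplex (star t) * hx - toComplex A * toComplex t * hxc

lemma NTinv {x u : ℂ} (hu0 : u ≠ 0) (h : RotCond u x) : RotCond u⁻¹ x := by
  obtain ⟨a, b, hb0, hcop, hba, g, hg⟩ := h
  have ha0 : a ≠ 0 := by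
    intro h'
    rw [h', toComplex_zero] at hba
    rcases mul_eq_zero.mp hba with h'' | h''
    · exact toC_ne_zero hb0 h''
    · exact hu0 h''
  refine ⟨b, a, ha0, hcop.symm, ?_, -g, ?_⟩
  · rw [← hba]
    field_simp
  · rw [toComplex_neg]
    linear_combination -hg

lemma OCs_form {x : ℂ} {f : ℂ → ℂ} (hf : f ∈ OCs x) :
    (∃ u, ‖u‖ = 1 ∧ ∀ w, f w = u * w) ∨ (∃ u, ‖u‖ = 1 ∧ ∀ w, f w = u * conj w) := by
  obtain ⟨R, hR⟩ := hf.1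
  obtain ⟨a, ha⟩ := linear_isometry_complex R
  have hnorm : ‖(a : ℂ)‖ = 1 := mem_sphere_zero_iff_norm.mp a.2
  rcases ha with h | h
  · exact Or.inl ⟨a, hnorm, fun w => by rw [← hR, h, rotation_apply]⟩
  · exact Or.inr ⟨a, hnorm, fun w => by
      rw [← hR, h, LinearIsometryEquiv.trans_apply, conjLIE_apply, rotation_apply]⟩

theorem OC_shifted_subgroup_iff (x : ℂ) :
    (id ∈ OCs x ∧ (∀ f ∈ OCs x, ∀ g ∈ OCs x, f ∘ g ∈ OCs x) ∧
        (∀ f ∈ OCs x, ∀ g : ℂ → ℂ, g ∘ f = id → f ∘ g = id → g ∈ OCs x)) ↔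
      (∀ T₁ ∈ OCs x, ∀ T₂ ∈ OCs x, IsReflection T₁ → IsReflection T₂ →
        T₁ ∘ T₂ ∈ SOCs x) := by
  constructor
  · rintro ⟨-, hcomp, -⟩ T₁ hT₁ T₂ hT₂ hR₁ hR₂
    obtain ⟨u₁, hu₁, hf₁⟩ := hR₁
    obtain ⟨u₂, hu₂, hf₂⟩ := hR₂
    refine ⟨hcomp T₁ hT₁ T₂ hT₂, u₁ * conj u₂, ?_, fun w => ?_⟩
    · rw [norm_mul, hu₁, one_mul, RCLike.norm_conj, hu₂]
    · rw [Function.comp_apply, hf₂, hf₁, map_mul, Complex.conj_conj]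
      ring
  · intro hrefl
    refine ⟨?_, ?_, ?_⟩
    · refine ⟨⟨LinearIsometryEquiv.refl ℝ ℂ, rfl⟩, x, mem_shifted.mpr ⟨0, by simp⟩,
        Zi, le_rfl, ?_, ?_⟩
      · rw [AddSubgroup.relIndex_self]
        exact one_ne_zero
      · rw [Set.image_id, Set.inter_self]
        rfl
    · intro f hf g hg
      rcases OCs_form hf with ⟨u₁, hu₁, hf₁⟩ | ⟨u₁, hu₁, hf₁⟩ <;>
        rcases OCs_form hg with ⟨u₂, hu₂, hf₂⟩ | ⟨u₂, hu₂, hf₂⟩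
      · exact (rot_mem_iff (by rw [norm_mul, hu₁, hu₂, one_mul])
          (fun w => by rw [Function.comp_apply, hf₂, hf₁]; ring)).mpr
          (NT1 ((rot_mem_iff hu₁ hf₁).mp hf) ((rot_mem_iff hu₂ hf₂).mp hg))
      · exact (refl_mem_iff (by rw [norm_mul, hu₁, hu₂, one_mul])
          (fun w => by rw [Function.comp_apply, hf₂, hf₁]; ring)).mpr
          (NT2 hu₁ ((rot_mem_iff hu₁ hf₁).mp hf) ((refl_mem_iff hu₂ hf₂).mp hg))
      · exact (refl_mem_iff (by rw [norm_mul, hu₁, one_mul, RCLike.norm_conj, hu₂])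
          (fun w => by rw [Function.comp_apply, hf₂, hf₁, map_mul]; ring)).mpr
          (NT3 hu₂ ((refl_mem_iff hu₁ hf₁).mp hf) ((rot_mem_iff hu₂ hf₂).mp hg))
      · exact (hrefl f hf g hg ⟨u₁, hu₁, hf₁⟩ ⟨u₂, hu₂, hf₂⟩).1
    · intro f hf g hgf hfg
      rcases OCs_form hf with ⟨u, hu, hfu⟩ | ⟨u, hu, hfu⟩
      · have hu0 : u ≠ 0 := fun h => by simp [h] at hu
        have hginv : ∀ w, g w = u⁻¹ * w := by
          intro w
          have h2 := congrFun hfg w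
          rw [Function.comp_apply, hfu] at h2
          simp only [id_eq] at h2
          apply mul_left_cancel₀ hu0
          rw [h2, ← mul_assoc, mul_inv_cancel₀ hu0, one_mul]
        exact (rot_mem_iff (by rw [norm_inv, hu, inv_one]) hginv).mpr
          (NTinv hu0 ((rot_mem_iff hu hfu).mp hf))
      · have hu0 : u ≠ 0 := fun h => by simp [h] at hu
        have h1 : u * conj u = 1 := by
          rw [Complex.mul_conj]
          rw [Complex.normSq_eq_norm_sq, hu]
          norm_num
        have hgfeq : ∀ w, g w = u * conj w := by
          intro w
          have h2 := congrFun hfg w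
          rw [Function.comp_apply, hfu] at h2
          simp only [id_eq] at h2
          have h4 : conj (g w) = conj u * w := by
            apply mul_left_cancel₀ hu0
            rw [h2, ← mul_assoc, h1, one_mul]
          rw [← Complex.conj_conj (g w), h4, map_mul, Complex.conj_conj]
        have hgeqf : g = f := funext fun w => by rw [hgfeq w, hfu]
        rwa [hgeqf]
end
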